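/- Fix θ₀ ∈ ℝ^d. The gradient at θ = θ₀ of the map θ ↦ KL(Rπ_{θ₀} ‖ π_θ) equals −(1/J(θ₀)) · ∇J(θ₀), where ∇J(θ₀) = Σ_τ R(τ) π_{θ₀}(τ) ∇_θ log π_θ(τ)|_{θ=θ₀} is the REINFORCE policy-gradient update. In particular, a gradient-descent step on θ ↦ KL(Rπ_{θ₀} ‖ π_θ) at θ₀ moves in the direction of a positive multiple of the REINFORCE gradient-ascent step. -/

import Mathlib

/-- Expected return `J(π) = ∑ τ, R τ * π τ`. -/
noncomputable def Jexp {T : Type*} [Fintype T] (R π : T → ℝ) : ℝ := ∑ τ, R τ * π τ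

/-- Improved policy `Rπ(τ) = R τ * π τ / J(π)`. -/
noncomputable def impPolicy {T : Type*} [Fintype T] (R π : T → ℝ) (τ : T) : ℝ :=
  R τ * π τ / Jexp R π

/-- KL divergence between pmfs on a finite type (with `0 * log 0 = 0`). -/
noncomputable def klDiv {T : Type*} [Fintype T] (p q : T → ℝ) : ℝ :=
  ∑ τ, p τ * Real.log (p τ / q τ)

section helpers

open InnerProductSpace

variable {F : Type*} [NormedAddCommGroup F] [InnerProductSpace ℝ F] [CompleteSpace F]

lemma HasGradientAt.sum' {ι : Type*} (s : Finset ι) {f : ι → F → ℝ} {f' : ι → F} {x : F}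
    (h : ∀ i ∈ s, HasGradientAt (f i) (f' i) x) :
    HasGradientAt (fun y => ∑ i ∈ s, f i y) (∑ i ∈ s, f' i) x := by
  rw [hasGradientAt_iff_hasFDerivAt, map_sum]
  exact HasFDerivAt.fun_sum fun i hi => (h i hi)

lemma HasGradientAt.const_mul' {f : F → ℝ} {f' : F} {x : F} (c : ℝ)
    (h : HasGradientAt f f' x) :
    HasGradientAt (fun y => c * f y) (c • f') x := by
  rw [hasGradientAt_iff_hasFDerivAt] at h ⊢
  rw [map_smulₛₗ]
  simpa using h.const_mul c

lemma HasGradientAt.const_add' {f : F → ℝ} {f' : F} {x : F} (c : ℝ)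
    (h : HasGradientAt f f' x) :
    HasGradientAt (fun y => c + f y) f' x := by
  rw [hasGradientAt_iff_hasFDerivAt] at h ⊢
  exact h.const_add c

lemma HasGradientAt.log' {f : F → ℝ} {f' : F} {x : F}
    (h : HasGradientAt f f' x) (hf : f x ≠ 0) :
    HasGradientAt (fun y => Real.log (f y)) ((f x)⁻¹ • f') x := by
  rw [hasGradientAt_iff_hasFDerivAt] at h ⊢
  rw [map_smulₛₗ]
  simpa [smul_smul] using h.log hf

end helpers

/-- The gradient at `θ = θ₀` of `θ ↦ KL(Rπ_{θ₀} ‖ π_θ)` equals `-(1 / J(θ₀)) • ∇J(θ₀)`,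
where `∇J(θ₀) = ∑ τ, R τ * π_{θ₀} τ • ∇ log π_θ(τ)|_{θ₀}` is the REINFORCE update. -/
theorem operator_reinforce_trajectory
    {T : Type*} [Fintype T] [Nonempty T] {d : ℕ}
    (R : T → ℝ) (hR : ∀ τ, 0 < R τ)
    (π : EuclideanSpace ℝ (Fin d) → T → ℝ)
    (hπpos : ∀ θ τ, 0 < π θ τ)
    (hπsum : ∀ θ, ∑ τ, π θ τ = 1)
    (hπdiff : ∀ τ, Differentiable ℝ (fun θ => π θ τ))
    (θ₀ : EuclideanSpace ℝ (Fin d))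
    (J : EuclideanSpace ℝ (Fin d) → ℝ) (hJ : J = fun θ => Jexp R (π θ)) :
    gradient (fun θ => klDiv (impPolicy R (π θ₀)) (π θ)) θ₀
        = -(1 / J θ₀) • gradient J θ₀ ∧
      gradient J θ₀
        = ∑ τ, (R τ * π θ₀ τ) • gradient (fun θ => Real.log (π θ τ)) θ₀ := by
  -- basic positivity
  have hJ0 : 0 < Jexp R (π θ₀) := by
    apply Finset.sum_pos (fun τ _ => mul_pos (hR τ) (hπpos θ₀ τ)) Finset.univ_nonempty
  set G : T → EuclideanSpace ℝ (Fin d) := fun τ => gradient (fun θ => π θ τ) θ₀ with hG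
  have hGrad : ∀ τ, HasGradientAt (fun θ => π θ τ) (G τ) θ₀ := fun τ =>
    ((hπdiff τ).differentiableAt).hasGradientAt
  set g : T → EuclideanSpace ℝ (Fin d) := fun τ => (π θ₀ τ)⁻¹ • G τ with hg
  have hLog : ∀ τ, HasGradientAt (fun θ => Real.log (π θ τ)) (g τ) θ₀ := fun τ =>
    (hGrad τ).log' (ne_of_gt (hπpos θ₀ τ))
  have hglog : ∀ τ, gradient (fun θ => Real.log (π θ τ)) θ₀ = g τ := fun τ =>
    (hLog τ).gradient
  -- gradient of J
  have hJgrad : HasGradientAt J (∑ τ, (R τ) • G τ) θ₀ := by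
    rw [hJ]
    unfold Jexp
    exact HasGradientAt.sum' Finset.univ fun τ _ => (hGrad τ).const_mul' (R τ)
  have hJeq : gradient J θ₀ = ∑ τ, (R τ * π θ₀ τ) • g τ := by
    rw [hJgrad.gradient]
    refine Finset.sum_congr rfl fun τ _ => ?_
    rw [hg, smul_smul, mul_assoc, mul_inv_cancel₀ (ne_of_gt (hπpos θ₀ τ)), mul_one]
  refine ⟨?_, by rw [hJeq]; exact Finset.sum_congr rfl fun τ _ => by rw [hglog τ]⟩
  -- gradient of the KL
  set p : T → ℝ := impPolicy R (π θ₀) with hp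
  have hpval : ∀ τ, p τ = R τ * π θ₀ τ / Jexp R (π θ₀) := fun τ => rfl
  have hppos : ∀ τ, 0 < p τ := fun τ =>
    div_pos (mul_pos (hR τ) (hπpos θ₀ τ)) hJ0
  have hKL : HasGradientAt (fun θ => klDiv p (π θ)) (∑ τ, (-(p τ)) • g τ) θ₀ := by
    have : (fun θ => klDiv p (π θ))
        = fun θ => ∑ τ, (p τ * Real.log (p τ) + (-(p τ)) * Real.log (π θ τ)) := by
      funext θ
      unfold klDiv
      refine Finset.sum_congr rfl fun τ _ => ?_
      rw [Real.log_div (ne_of_gt (hppos τ)) (ne_of_gt (hπpos θ τ))]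
      ring
    rw [this]
    exact HasGradientAt.sum' Finset.univ fun τ _ =>
      ((hLog τ).const_mul' (-(p τ))).const_add' _
  rw [hKL.gradient, hJeq, Finset.smul_sum]
  refine Finset.sum_congr rfl fun τ _ => ?_
  rw [smul_smul, hJ]
  have : -(p τ) = -(1 / Jexp R (π θ₀)) * (R τ * π θ₀ τ) := by
    rw [hpval]; field_simp
  rw [this]
  simp only [hg, smul_smul]
  congr 1
  ring
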